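/- Let P be a poset such that mxl(P) is a finite cutset of P, and let f : P → P be an order-preserving map. If f has a fixed point, then the induced map 𝒟(f) : 𝒟(P) → 𝒟(P) has a fixed point. -/

import Mathlib

variable {α : Type*}

def belowSet [PartialOrder α] (A : Set α) : Set α := {p | ∃ a ∈ A, p ≤ a}

def aboveSet [PartialOrder α] (A : Set α) : Set α := {p | ∃ a ∈ A, a ≤ p}

def connRel [PartialOrder α] (S : Set α) (x y : α) : Prop :=
  Relation.ReflTransGen (fun a b => a ∈ S ∧ b ∈ S ∧ (a ≤ b ∨ b ≤ a)) x y

def connComp [PartialOrder α] (S : Set α) (x : α) : Set α := {y | connRel S x y}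

def IsConnSub [PartialOrder α] (S : Set α) : Prop :=
  S.Nonempty ∧ ∀ x ∈ S, ∀ y ∈ S, connRel S x y

def IsConnCompOf [PartialOrder α] (S C : Set α) : Prop := ∃ x ∈ S, C = connComp S x

def crosscut [PartialOrder α] (X : Set α) : Set (Set α) :=
  {C | ∃ A : Set α, A ⊆ X ∧ A.Nonempty ∧ IsConnCompOf (belowSet A) C}

def crosscutU [PartialOrder α] (X : Set α) : Set (Set α) :=
  {C | ∃ A : Set α, A ⊆ X ∧ A.Nonempty ∧ IsConnCompOf (aboveSet A) C}

def mxl (α : Type*) [PartialOrder α] : Set α := {a | IsMax a}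
def mnl (α : Type*) [PartialOrder α] : Set α := {a | IsMin a}

def DSet (α : Type*) [PartialOrder α] : Set (Set α) := crosscut (mxl α)
def USet (α : Type*) [PartialOrder α] : Set (Set α) := crosscutU (mnl α)

def FPP (β : Type*) [Preorder β] : Prop := ∀ f : β → β, Monotone f → ∃ x, f x = x

section Aux

variable [PartialOrder α]

lemma connRel_symm {S : Set α} {x y : α} (h : connRel S x y) : connRel S y x := by
  have : Symmetric (fun a b : α => a ∈ S ∧ b ∈ S ∧ (a ≤ b ∨ b ≤ a)) := by
    intro a b ⟨h1, h2, h3⟩; exact ⟨h2, h1, h3.symm⟩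
  haveI inst : Std.Symm (fun a b : α => a ∈ S ∧ b ∈ S ∧ (a ≤ b ∨ b ≤ a)) := ⟨fun a b hab => this hab⟩
  exact @Std.Symm.symm _ (Relation.ReflTransGen fun a b : α => a ∈ S ∧ b ∈ S ∧ (a ≤ b ∨ b ≤ a)) Relation.ReflTransGen.stdSymm x y h

lemma connRel_mono {S T : Set α} (hST : S ⊆ T) {x y : α} (h : connRel S x y) :
    connRel T x y :=
  Relation.ReflTransGen.mono (r := fun a b => a ∈ S ∧ b ∈ S ∧ (a ≤ b ∨ b ≤ a)) (p := fun a b => a ∈ T ∧ b ∈ T ∧ (a ≤ b ∨ b ≤ a)) (fun a b ⟨h1, h2, h3⟩ => ⟨hST h1, hST h2, h3⟩) x y h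

lemma connComp_eq_of_mem {S : Set α} {x y : α} (h : y ∈ connComp S x) :
    connComp S x = connComp S y := by
  ext z
  exact ⟨fun hz => (connRel_symm h).trans hz, fun hz => h.trans hz⟩

lemma mem_of_mem_connComp {S : Set α} {x y : α} (hx : x ∈ S) (h : y ∈ connComp S x) :
    y ∈ S := by
  rcases h.cases_tail with h | ⟨c, _, hc⟩
  · exact h ▸ hx
  · exact hc.2.1

/-- upward closure of components: if `p` in the component and `p ≤ a ∈ A`, then `a` too -/
lemma max_mem_comp {A : Set α} {x p a : α}
    (hp : p ∈ connComp (belowSet A) x) (ha : a ∈ A) (hpa : p ≤ a) :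
    a ∈ connComp (belowSet A) x :=
  hp.tail ⟨⟨a, ha, hpa⟩, ⟨a, ha, le_refl a⟩, Or.inl hpa⟩

lemma comp_eq_comp_inter_mxl {A : Set α} (hA : A ⊆ mxl α) {x : α} (hx : x ∈ belowSet A) :
    connComp (belowSet A) x
      = connComp (belowSet ((connComp (belowSet A) x) ∩ mxl α)) x := by
  set D := connComp (belowSet A) x with hD
  set B := D ∩ mxl α with hB
  apply Set.Subset.antisymm
  · intro y hy
    have key : ∀ z, connRel (belowSet A) x z → connRel (belowSet B) x z := by
      intro z hz
      induction hz with
      | refl => exact Relation.ReflTransGen.refl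
      | @tail b c hxb hbc ih =>
        have hbD : b ∈ D := hxb
        have hcD : c ∈ D := Relation.ReflTransGen.tail hxb hbc
        obtain ⟨ab, hab, hbab⟩ := hbc.1
        obtain ⟨ac, hac, hcac⟩ := hbc.2.1
        have habD : ab ∈ D := max_mem_comp hbD hab hbab
        have hacD : ac ∈ D := max_mem_comp hcD hac hcac
        exact ih.tail ⟨⟨ab, ⟨habD, hA hab⟩, hbab⟩, ⟨ac, ⟨hacD, hA hac⟩, hcac⟩, hbc.2.2⟩
    exact key y hy
  · have hBA : B ⊆ A := by
      intro m ⟨hmD, hmmax⟩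
      obtain ⟨a, haA, hma⟩ := mem_of_mem_connComp hx hmD
      have : a = m := le_antisymm (hmmax hma) hma
      exact this ▸ haA
    intro y hy
    refine connRel_mono ?_ hy
    rintro p ⟨b, hb, hpb⟩
    exact ⟨b, hBA hb, hpb⟩

end Aux

theorem stmt14 [PartialOrder α]
    (hfin : (mxl α).Finite)
    (hcut : ∀ x : α, ∃ m ∈ mxl α, x ≤ m)
    (f : α → α) (hf : Monotone f)
    (Df : Set α → Set α)
    (hDf : ∀ C ∈ DSet α, Df C ∈ DSet α ∧ f '' C ⊆ Df C ∧
      ∀ D ∈ DSet α, f '' C ⊆ D → Df C ⊆ D)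
    (hfix : ∃ x, f x = x) :
    ∃ C ∈ DSet α, Df C = C := by
  obtain ⟨x, hx⟩ := hfix
  have hSmem : ∀ p : α, p ∈ belowSet (mxl α) := fun p => hcut p
  set S := belowSet (mxl α) with hS
  set C : Set α := connComp S x with hC
  have hCD : C ∈ DSet α := ⟨mxl α, le_refl _, by
    obtain ⟨m, hm, _⟩ := hcut x; exact ⟨m, hm⟩, x, hSmem x, rfl⟩
  have hxC : x ∈ C := Relation.ReflTransGen.refl
  -- f maps C into C
  have hfC : f '' C ⊆ C := by
    rintro _ ⟨y, hy, rfl⟩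
    have : connRel S (f x) (f y) := by
      induction hy with
      | refl => exact Relation.ReflTransGen.refl
      | @tail b c _ hbc ih =>
        exact ih.tail ⟨hSmem _, hSmem _, hbc.2.2.imp (fun h => hf h) (fun h => hf h)⟩
    rwa [hx] at this
  -- the iterated sequence
  set D : ℕ → Set α := fun n => Df^[n] C with hDdef
  have hDsucc : ∀ n, D (n + 1) = Df (D n) := fun n => Function.iterate_succ_apply' Df n C
  have hmono : ∀ C₁ ∈ DSet α, ∀ C₂ ∈ DSet α, C₁ ⊆ C₂ → Df C₁ ⊆ Df C₂ := by
    intro C₁ h₁ C₂ h₂ hsub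
    exact (hDf C₁ h₁).2.2 (Df C₂) (hDf C₂ h₂).1
      ((Set.image_mono (f := f) hsub).trans (hDf C₂ h₂).2.1)
  have key : ∀ n, D n ∈ DSet α ∧ x ∈ D n ∧ D (n + 1) ⊆ D n := by
    intro n
    induction n with
    | zero =>
      refine ⟨hCD, hxC, ?_⟩
      rw [hDsucc]
      exact (hDf C hCD).2.2 C hCD hfC
    | succ n ih =>
      obtain ⟨hmem, hxn, hsub⟩ := ih
      have hmem' : D (n + 1) ∈ DSet α := by rw [hDsucc]; exact (hDf _ hmem).1
      refine ⟨hmem', ?_, ?_⟩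
      · rw [hDsucc]
        exact (hDf _ hmem).2.1 ⟨x, hxn, hx⟩
      · have h1 : Df (D (n + 1)) ⊆ Df (D n) := hmono _ hmem' _ hmem hsub
        rw [← hDsucc n, ← hDsucc (n + 1)] at h1
        exact h1
  -- stabilization of the maximal element sets
  set B : ℕ → Set α := fun n => D n ∩ mxl α with hBdef
  have hBanti : ∀ n, B (n + 1) ⊆ B n := fun n =>
    Set.inter_subset_inter_left _ (key n).2.2
  have hstab : ∃ n, B (n + 1) = B n := by
    by_contra h
    push_neg at h
    have hlt : ∀ n, (B (n + 1)).ncard < (B n).ncard := by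
      intro n
      exact Set.ncard_lt_ncard (ssubset_of_subset_of_ne (hBanti n) (h n))
        (hfin.subset (Set.inter_subset_right))
    have : ∀ n, (B n).ncard + n ≤ (B 0).ncard := by
      intro n
      induction n with
      | zero => simp
      | succ n ih =>
        have := hlt n
        omega
    have h2 := this ((B 0).ncard + 1)
    omega
  obtain ⟨n, hn⟩ := hstab
  -- each D n is the component of x in belowSet (B n)
  have hrep : ∀ m, D m = connComp (belowSet (B m)) x := by
    intro m
    obtain ⟨hmem, hxm, _⟩ := key m
    obtain ⟨A, hA, hAne, x₀, hx₀, hDeq⟩ := hmem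
    have hDx : D m = connComp (belowSet A) x := by
      rw [hDeq]
      exact connComp_eq_of_mem (hDeq ▸ hxm)
    have hxS : x ∈ belowSet A := by
      have : x ∈ connComp (belowSet A) x₀ := hDeq ▸ hxm
      exact mem_of_mem_connComp hx₀ this
    have := comp_eq_comp_inter_mxl hA hxS
    rw [← hDx] at this
    rw [hDx] at this ⊢
    simpa [hBdef, ← hDx] using this
  refine ⟨D n, (key n).1, ?_⟩
  rw [← hDsucc]
  rw [hrep n, hrep (n + 1), hn]
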